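/- arXiv:1511.04913 — 3 statements merged into one kernel-verified Lean document; each statement's English description precedes it below -/
import Mathlib

section
/- Let G be a locally profinite group, P a closed subgroup, and U ⊆ G an open compact subgroup with G = PU. Set U_P = P ∩ U. Assume the left Haar measures on G and P giving U and U_P volume 1 satisfy the Iwasawa integration formula ∫_G f(g) dg = ∫_U ∫_P f(pu) dp du. Then restriction of functions r_P : H(G,U) → H(P,U_P) is a ring homomorphism. -/
/-!
STATEMENT 3: Let `G` be a locally profinite group, `P` a closed subgroup, and `U ⊆ G` open
compact with `G = PU`; set `U_P = P ∩ U`.  Assume the left Haar measures on `G` and `P` giving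
`U` and `U_P` volume 1 satisfy the Iwasawa integration formula
`∫_G f(g) dg = ∫_U ∫_P f(pu) dp du`.  Then restriction of functions
`r_P : H(G,U) → H(P,U_P)` is a ring homomorphism.
-/

open MeasureTheory

lemma hecke_locallyConstant {G : Type*} [Group G] [TopologicalSpace G] [IsTopologicalGroup G]
    {U : Subgroup G} (hUopen : IsOpen (U : Set G)) {f : G → ℤ}
    (hf : ∀ u₁ ∈ U, ∀ u₂ ∈ U, ∀ g : G, f (u₁ * g * u₂) = f g) :
    IsLocallyConstant f := by
  rw [IsLocallyConstant.iff_exists_open]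
  intro g
  refine ⟨(fun u => g * u) '' (U : Set G), (Homeomorph.mulLeft g).isOpenMap _ hUopen,
    ⟨1, U.one_mem, by simp⟩, ?_⟩
  rintro y ⟨u, hu, rfl⟩
  simpa using hf 1 U.one_mem u hu g

lemma hecke_cont {G : Type*} [Group G] [TopologicalSpace G] [IsTopologicalGroup G]
    {U : Subgroup G} (hUopen : IsOpen (U : Set G)) {f : G → ℤ}
    (hf : ∀ u₁ ∈ U, ∀ u₂ ∈ U, ∀ g : G, f (u₁ * g * u₂) = f g) :
    Continuous (fun x => (f x : ℝ)) :=
  ((hecke_locallyConstant hUopen hf).comp (fun n : ℤ => (n : ℝ))).continuous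

/-- A compactly supported, `U`-bi-invariant, ℤ-valued function (an element of `H(G,U)`). -/
def IsHeckeFunction {G : Type*} [Group G] [TopologicalSpace G] (U : Subgroup G)
    (f : G → ℤ) : Prop :=
  HasCompactSupport f ∧ ∀ u₁ ∈ U, ∀ u₂ ∈ U, ∀ g : G, f (u₁ * g * u₂) = f g

/-- Convolution with respect to a measure. -/
noncomputable def heckeConv {G : Type*} [Group G] [MeasurableSpace G]
    (μ : Measure G) (f₁ f₂ : G → ℝ) : G → ℝ :=
  fun g => ∫ x, f₁ x * f₂ (x⁻¹ * g) ∂μ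

theorem stmt_3 {G : Type*} [Group G] [TopologicalSpace G] [IsTopologicalGroup G]
    [LocallyCompactSpace G] [TotallyDisconnectedSpace G] [T2Space G]
    [MeasurableSpace G] [BorelSpace G]
    (P : Subgroup G) (hP : IsClosed (P : Set G))
    (U : Subgroup G) (hUopen : IsOpen (U : Set G)) (hUcompact : IsCompact (U : Set G))
    (hPU : ∀ g : G, ∃ p ∈ P, ∃ u ∈ U, g = p * u)
    -- left Haar measures on `G` and on `P`, normalized on `U` resp. `U_P = P ∩ U`
    (μ : Measure G) [μ.IsMulLeftInvariant] [IsFiniteMeasureOnCompacts μ]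
    (hμU : μ (U : Set G) = 1)
    (ν : Measure ↥P) [ν.IsMulLeftInvariant] [IsFiniteMeasureOnCompacts ν]
    (hνUP : ν {p : ↥P | (p : G) ∈ U} = 1)
    -- the Iwasawa integration formula `∫_G f dg = ∫_U ∫_P f(pu) dp du`
    (hIwasawa : ∀ f : G → ℝ, Continuous f → HasCompactSupport f →
      ∫ g, f g ∂μ = ∫ u in (U : Set G), (∫ p : ↥P, f ((p : G) * u) ∂ν) ∂μ) :
    -- restriction of functions is multiplicative: for Hecke functions `f₁, f₂ ∈ H(G,U)`,
    -- the convolution over `P` of the restrictions equals the restriction of the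
    -- convolution over `G` …
    (∀ f₁ f₂ : G → ℤ, IsHeckeFunction U f₁ → IsHeckeFunction U f₂ →
      ∀ γ : ↥P,
        heckeConv ν (fun p : ↥P => (f₁ (p : G) : ℝ)) (fun p : ↥P => (f₂ (p : G) : ℝ)) γ =
          heckeConv μ (fun x => (f₁ x : ℝ)) (fun x => (f₂ x : ℝ)) (γ : G)) ∧
    -- … and it sends the unit `[U]` to the unit `[U_P]`
    (∀ p : ↥P, Set.indicator (U : Set G) (fun _ => (1 : ℤ)) (p : G) =
      Set.indicator {q : ↥P | (q : G) ∈ U} (fun _ => (1 : ℤ)) p) := by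
  constructor
  · intro f₁ f₂ hf₁ hf₂ γ
    have hc1 : Continuous (fun x => (f₁ x : ℝ)) := hecke_cont hUopen hf₁.2
    have hc2 : Continuous (fun x => (f₂ x : ℝ)) := hecke_cont hUopen hf₂.2
    set F : G → ℝ := fun x => (f₁ x : ℝ) * (f₂ (x⁻¹ * (γ : G)) : ℝ) with hF
    have hFc : Continuous F :=
      hc1.mul (hc2.comp (by continuity))
    have hs1 : HasCompactSupport (fun x => (f₁ x : ℝ)) :=
      hf₁.1.comp_left (g := fun n : ℤ => (n : ℝ)) (by simp)
    have hFs : HasCompactSupport F := hs1.mul_right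
    have hI := hIwasawa F hFc hFs
    have hRHS : heckeConv μ (fun x => (f₁ x : ℝ)) (fun x => (f₂ x : ℝ)) (γ : G)
        = ∫ g, F g ∂μ := rfl
    rw [hRHS, hI]
    have hinner : ∀ u ∈ (U : Set G),
        (∫ p : ↥P, F ((p : G) * u) ∂ν)
          = ∫ p : ↥P, (f₁ (p : G) : ℝ) * (f₂ ((p : G)⁻¹ * (γ : G)) : ℝ) ∂ν := by
      intro u hu
      congr 1
      funext p
      have h1 : f₁ ((p : G) * u) = f₁ (p : G) := by
        have := hf₁.2 1 U.one_mem u hu (p : G)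
        simpa using this
      have h2 : f₂ (((p : G) * u)⁻¹ * (γ : G)) = f₂ ((p : G)⁻¹ * (γ : G)) := by
        have := hf₂.2 u⁻¹ (U.inv_mem hu) 1 U.one_mem ((p : G)⁻¹ * (γ : G))
        rw [mul_one] at this
        rw [← this]
        congr 1
        group
      simp only [hF, h1, h2]
    rw [setIntegral_congr_fun hUopen.measurableSet hinner, setIntegral_const, measureReal_def, hμU,
      ENNReal.toReal_one, one_smul]
    simp only [heckeConv, Subgroup.coe_mul, InvMemClass.coe_inv]
  · intro p
    by_cases h : (p : G) ∈ U <;> simp [Set.indicator, h]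
end

section
/- Let G be a locally profinite group, P ⊆ G a closed subgroup with G = PU and U_P = P ∩ U for an open compact U ⊆ G. Let W be a ℤ[P]-module and V = Ind_P^G W the induced module of functions f : G → W with f(pg) = p·f(g). Then evaluation at the identity gives an isomorphism of abelian groups V^U ≅ W^{U_P}, and for α ∈ P with UαU = ⊔ᵢ αᵢU (αᵢ ∈ P), the Hecke operator [UαU] on V^U corresponds to the operator Σᵢ [αᵢ U_P] on W^{U_P}. -/
open scoped Pointwise

/-!
STATEMENT 4: Let `G` be a locally profinite group, `P ⊆ G` a closed subgroup with `G = PU`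
and `U_P = P ∩ U` for an open compact `U ⊆ G`.  Let `W` be a `ℤ[P]`-module and
`V = Ind_P^G W` the induced module of functions `f : G → W` with `f(pg) = p·f(g)`.  Then
evaluation at the identity gives an isomorphism of abelian groups `V^U ≅ W^{U_P}`, and for
`α ∈ P` with `UαU = ⊔ᵢ αᵢU` (`αᵢ ∈ P`), the Hecke operator `[UαU]` on `V^U` corresponds to
the operator `Σᵢ [αᵢ U_P]` on `W^{U_P}`.
-/

theorem stmt_4 {G : Type*} [Group G] [TopologicalSpace G] [IsTopologicalGroup G]
    [LocallyCompactSpace G] [TotallyDisconnectedSpace G] [T2Space G]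
    (P : Subgroup G) (hP : IsClosed (P : Set G))
    (U : Subgroup G) (hUopen : IsOpen (U : Set G)) (hUcompact : IsCompact (U : Set G))
    (hPU : ∀ g : G, ∃ p ∈ P, ∃ u ∈ U, g = p * u)
    {W : Type*} [AddCommGroup W] [DistribMulAction ↥P W]
    (α : G) (hα : α ∈ P)
    {m : ℕ} (a : Fin m → G) (haP : ∀ i, a i ∈ P)
    (ha : (U : Set G) * {α} * (U : Set G) = ⋃ i, a i • (U : Set G))
    (ha' : Pairwise (Function.onFun Disjoint fun i => a i • (U : Set G))) :
    -- evaluation at `1` is a bijection from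
    -- `V^U = (Ind_P^G W)^U` (`P`-equivariant, right `U`-invariant functions `G → W`)
    -- onto `W^{U_P}`
    Set.BijOn (fun f : G → W => f 1)
      {f : G → W | (∀ (p : ↥P) (g : G), f ((p : G) * g) = p • f g) ∧
        ∀ u ∈ U, ∀ x : G, f (x * u) = f x}
      {w : W | ∀ p : ↥P, (p : G) ∈ U → p • w = w} ∧
    -- and under this bijection the Hecke operator `[UαU]` (whose value on `f ∈ V^U`,
    -- evaluated at `1`, is `Σᵢ f(αᵢ)`) corresponds to `Σᵢ [αᵢ U_P]`, i.e. `w ↦ Σᵢ αᵢ • w`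
    ∀ f : G → W, (∀ (p : ↥P) (g : G), f ((p : G) * g) = p • f g) →
      (∀ u ∈ U, ∀ x : G, f (x * u) = f x) →
      (∑ i, f (a i)) = ∑ i, (⟨a i, haP i⟩ : ↥P) • f 1 := by
  classical
  choose pc hpc uc huc heq using hPU
  constructor
  · refine ⟨?_, ?_, ?_⟩
    · intro f hf p hpU
      have h1 : p • f 1 = f ((p : G) * 1) := (hf.1 p 1).symm
      have h2 := hf.2 (p : G) hpU 1
      rw [one_mul] at h2
      rw [h1, mul_one, h2]
    · intro f hf g hg hfg
      funext x
      have e1 : f x = (⟨pc x, hpc x⟩ : ↥P) • f 1 := by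
        calc f x = f (pc x * uc x) := by rw [← heq x]
          _ = f (pc x * 1 * uc x) := by rw [mul_one]
          _ = f (pc x * 1) := hf.2 (uc x) (huc x) _
          _ = (⟨pc x, hpc x⟩ : ↥P) • f 1 := hf.1 ⟨pc x, hpc x⟩ 1
      have e2 : g x = (⟨pc x, hpc x⟩ : ↥P) • g 1 := by
        calc g x = g (pc x * uc x) := by rw [← heq x]
          _ = g (pc x * 1 * uc x) := by rw [mul_one]
          _ = g (pc x * 1) := hg.2 (uc x) (huc x) _
          _ = (⟨pc x, hpc x⟩ : ↥P) • g 1 := hg.1 ⟨pc x, hpc x⟩ 1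
      rw [e1, e2]; exact congrArg _ hfg
    · intro w hw
      have key : ∀ (x : G) (q : ↥P) (v : G), v ∈ U → x = (q : G) * v →
          (⟨pc x, hpc x⟩ : ↥P) • w = q • w := by
        intro x q v hv hx
        have h : pc x * uc x = (q : G) * v := (heq x).symm.trans hx
        have hp : pc x = (q : G) * v * (uc x)⁻¹ := eq_mul_inv_of_mul_eq h
        have hr : (q : G)⁻¹ * pc x = v * (uc x)⁻¹ := by rw [hp]; group
        set r : ↥P := q⁻¹ * ⟨pc x, hpc x⟩ with hrdef
        have hrU : (r : G) ∈ U := by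
          have : (r : G) = v * (uc x)⁻¹ := hr
          rw [this]; exact U.mul_mem hv (U.inv_mem (huc x))
        have hrw : r • w = w := hw r hrU
        have : (⟨pc x, hpc x⟩ : ↥P) = q * r := by
          rw [hrdef]; group
        rw [this, mul_smul, hrw]
      refine ⟨fun x => (⟨pc x, hpc x⟩ : ↥P) • w, ⟨?_, ?_⟩, ?_⟩
      · intro p g
        have h1 := key ((p : G) * g) (p * ⟨pc g, hpc g⟩) (uc g) (huc g)
          (by push_cast; rw [mul_assoc, ← heq g])
        have h2 := key g ⟨pc g, hpc g⟩ (uc g) (huc g) (heq g)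
        simp only [h1, h2, mul_smul]
      · intro u hu x
        have h1 := key (x * u) ⟨pc x, hpc x⟩ (uc x * u) (U.mul_mem (huc x) hu)
          (by rw [← mul_assoc, ← heq x])
        simp only [h1]
      · have h1 := key 1 1 1 U.one_mem (by simp)
        simp only [h1, one_smul]
  · intro f hf1 hf2
    refine Finset.sum_congr rfl fun i _ => ?_
    have := hf1 ⟨a i, haP i⟩ 1
    rw [mul_one] at this
    exact this
end

section
/- Let G₀ be a topological group and X a compact topological space with a continuous right G₀-action. Then for any G₀-equivariant sheaf F on X, the G₀-action on the global sections Γ(X, F) is smooth, i.e. every global section is fixed by an open subgroup of G₀. -/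
/-!
STATEMENT 10: Let `G₀` be a topological group and `X` a compact topological space with a
continuous `G₀`-action.  Then for any `G₀`-equivariant sheaf `F` on `X`, the `G₀`-action on
the global sections `Γ(X, F)` is smooth: every global section is fixed by an open
neighbourhood of the identity in `G₀` (hence by an open subgroup, since the stabilizer of a
section is a subgroup).

We use the étalé-space model of sheaves: a sheaf on `X` is a local homeomorphism `π : E → X`,
an equivariant structure is a continuous `G₀`-action on `E` lifting the one on `X` (the
continuity in the group variable is exactly the content of the isomorphism
`θ : p*F ≅ m*F` on `X × G₀`), and a global section of `F` is a continuous section of `π`.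
-/

theorem stmt_10 {G₀ : Type*} [Group G₀] [TopologicalSpace G₀] [IsTopologicalGroup G₀]
    {X : Type*} [TopologicalSpace X] [CompactSpace X] [MulAction G₀ X]
    (hXcont : Continuous fun q : X × G₀ => q.2 • q.1)
    -- the étalé space of a `G₀`-equivariant sheaf `F` on `X`
    {E : Type*} [TopologicalSpace E] [MulAction G₀ E]
    (hEcont : Continuous fun q : E × G₀ => q.2 • q.1)
    (π : E → X) (hπ : IsLocalHomeomorph π)
    (hequiv : ∀ (g : G₀) (e : E), π (g • e) = g • π e)
    -- a global section `s ∈ Γ(X, F)`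
    (s : X → E) (hs : Continuous s) (hsec : ∀ x, π (s x) = x) :
    -- its stabilizer `{g | g • s = s}` is open in `G₀`
    IsOpen {g : G₀ | ∀ x : X, g • s x = s (g • x)} := by
  have ha : Continuous fun q : X × G₀ => q.2 • s q.1 :=
    hEcont.comp ((hs.comp continuous_fst).prodMk continuous_snd)
  have hb : Continuous fun q : X × G₀ => s (q.2 • q.1) := hs.comp hXcont
  have key : ∃ U : Set G₀, IsOpen U ∧ (1:G₀) ∈ U ∧
      ∀ g ∈ U, ∀ x : X, g • s x = s (g • x) := by
    have hx : ∀ x : X, ∃ W : Set X, ∃ V : Set G₀, IsOpen W ∧ IsOpen V ∧ x ∈ W ∧ (1:G₀) ∈ V ∧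
        ∀ y ∈ W, ∀ g ∈ V, g • s y = s (g • y) := by
      intro x
      obtain ⟨e, hxe, hfe⟩ := hπ (s x)
      have hΩopen : IsOpen {q : X × G₀ | (q.2 • s q.1) ∈ e.source ∧ s (q.2 • q.1) ∈ e.source} :=
        (e.open_source.preimage ha).inter (e.open_source.preimage hb)
      have hΩmem : (x, (1:G₀)) ∈
          {q : X × G₀ | (q.2 • s q.1) ∈ e.source ∧ s (q.2 • q.1) ∈ e.source} := by
        constructor <;> simp [one_smul, hxe]
      obtain ⟨W, V, hW, hV, hxW, h1V, hWV⟩ := isOpen_prod_iff.1 hΩopen x 1 hΩmem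
      refine ⟨W, V, hW, hV, hxW, h1V, ?_⟩
      intro y hy g hg
      have hmem := hWV (Set.mk_mem_prod hy hg)
      have hπeq : π (g • s y) = π (s (g • y)) := by
        rw [hequiv, hsec, hsec]
      exact e.injOn hmem.1 hmem.2 (by rw [← hfe]; exact hπeq)
    choose W V hW hV hxW h1V hWV using hx
    obtain ⟨t, ht⟩ := isCompact_univ.elim_finite_subcover W hW
      (fun x _ => Set.mem_iUnion.2 ⟨x, hxW x⟩)
    refine ⟨⋂ x ∈ t, V x, isOpen_biInter_finset (fun x _ => hV x), ?_, ?_⟩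
    · exact Set.mem_iInter₂.2 fun x _ => h1V x
    · intro g hg x
      obtain ⟨i, hi, hxi⟩ := Set.mem_iUnion₂.1 (ht (Set.mem_univ x))
      exact hWV i x hxi g (Set.mem_iInter₂.1 hg i hi)
  obtain ⟨U, hUopen, hU1, hU⟩ := key
  rw [isOpen_iff_mem_nhds]
  intro g₀ hg₀
  have hsub : (fun u => g₀ * u) '' U ⊆ {g : G₀ | ∀ x, g • s x = s (g • x)} := by
    rintro _ ⟨u, hu, rfl⟩ x
    rw [mul_smul, hU u hu, hg₀ (u • x), ← mul_smul]
  refine Filter.mem_of_superset ?_ hsub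
  exact ((Homeomorph.mulLeft g₀).isOpen_image.2 hUopen).mem_nhds ⟨1, hU1, mul_one g₀⟩
end
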